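/- Mass preservation and L¹-contraction of Ehrhard symmetrization: for sets E, E₁, E₂ of finite anisotropic Gaussian perimeter, one has γ_A(E) = γ_A(E^s) and γ_A(E₁ Δ E₂) ≥ γ_A(E₁^s Δ E₂^s), where E^s is the Ehrhard symmetrization of E with respect to the direction −e_n. -/

import Mathlib

open MeasureTheory Metric Filter Set
open scoped ENNReal Topology symmDiff

noncomputable section

/-- The quadratic form `⟨Ax, x⟩`. -/
def qf {m : ℕ} (A : Matrix (Fin m) (Fin m) ℝ) (x : Fin m → ℝ) : ℝ :=
  ∑ i, (∑ j, A i j * x j) * x i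

/-- The (unnormalized) Gaussian density `e^{−⟨Ax,x⟩/2}` at the point `x = (z,y)`. -/
def dens {n : ℕ} (A : Matrix (Fin (n + 1)) (Fin (n + 1)) ℝ) (z : Fin n → ℝ) (y : ℝ) : ℝ :=
  Real.exp (- qf A (Fin.snoc z y) / 2)

/-- The one-dimensional section `E_z` of `E ⊆ ℝⁿ × ℝ`. -/
def sect {n : ℕ} (E : Set ((Fin n → ℝ) × ℝ)) (z : Fin n → ℝ) : Set ℝ :=
  {y | (z, y) ∈ E}

/-- The Ehrhard symmetrization `E^s` of `E` with respect to the direction `−e_n`: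
`E^s = {(z,y) : y < φ_z⁻¹(v_E(z))}`, expressed equivalently as
`φ_z(y) < v_E(z)` since `φ_z` is a strictly increasing positive bijection onto
`(0, μ_z(ℝ))`. -/
def ehrhardSymm {n : ℕ} (A : Matrix (Fin (n + 1)) (Fin (n + 1)) ℝ)
    (E : Set ((Fin n → ℝ) × ℝ)) : Set ((Fin n → ℝ) × ℝ) :=
  {p | (∫ y in Set.Iio p.2, dens A p.1 y) < ∫ y in sect E p.1, dens A p.1 y}

/-- The anisotropic Gaussian measure `γ_A(E)` on `ℝⁿ × ℝ ≅ ℝ^{n+1}`. -/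
def gMass {n : ℕ} (A : Matrix (Fin (n + 1)) (Fin (n + 1)) ℝ)
    (E : Set ((Fin n → ℝ) × ℝ)) : ℝ :=
  (Real.sqrt A.det / (2 * Real.pi) ^ (((n : ℝ) + 1) / 2)) * ∫ p in E, dens A p.1 p.2

/-- The essential boundary `∂^M E` (points of density neither `0` nor `1`). -/
def essBoundaryP {n : ℕ} (E : Set ((Fin n → ℝ) × ℝ)) : Set ((Fin n → ℝ) × ℝ) :=
  {x | ¬ Tendsto (fun r : ℝ => volume (E ∩ ball x r) / volume (ball x r)) (𝓝[>] 0) (𝓝 0) ∧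
       ¬ Tendsto (fun r : ℝ => volume (E ∩ ball x r) / volume (ball x r)) (𝓝[>] 0) (𝓝 1)}

/-- `E` has finite anisotropic Gaussian perimeter:
`∫_{∂^M E} e^{−⟨Ax,x⟩/2} dH^{n} < ∞`. -/
def finGaussPerim {n : ℕ} (A : Matrix (Fin (n + 1)) (Fin (n + 1)) ℝ)
    (E : Set ((Fin n → ℝ) × ℝ)) : Prop :=
  (∫⁻ p in essBoundaryP E, ENNReal.ofReal (dens A p.1 p.2) ∂(μH[(n : ℝ)])) < ⊤

namespace EhrAux


lemma continuous_qf {m : ℕ} (A : Matrix (Fin m) (Fin m) ℝ) : Continuous (qf A) := by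
  unfold qf
  exact continuous_finset_sum _ fun i _ =>
    (continuous_finset_sum _ fun j _ => (continuous_const.mul (continuous_apply j))).mul
      (continuous_apply i)

lemma qf_pos {m : ℕ} {A : Matrix (Fin m) (Fin m) ℝ} (hA : A.PosDef)
    {x : Fin m → ℝ} (hx : x ≠ 0) : 0 < qf A x := by
  have h := hA.re_dotProduct_pos hx
  simpa [qf, dotProduct, Matrix.mulVec, mul_comm] using h

lemma qf_smul {m : ℕ} (A : Matrix (Fin m) (Fin m) ℝ) (t : ℝ) (x : Fin m → ℝ) :
    qf A (t • x) = t ^ 2 * qf A x := by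
  unfold qf
  rw [Finset.mul_sum]
  refine Finset.sum_congr rfl fun i _ => ?_
  have : (∑ j, A i j * (t • x) j) = t * ∑ j, A i j * x j := by
    rw [Finset.mul_sum]
    refine Finset.sum_congr rfl fun j _ => ?_
    simp [smul_eq_mul]; ring
  rw [this]
  simp [smul_eq_mul]; ring

/-- uniform coercivity of a positive definite quadratic form -/
lemma qf_coercive {m : ℕ} {A : Matrix (Fin (m+1)) (Fin (m+1)) ℝ} (hA : A.PosDef) :
    ∃ c > 0, ∀ x : Fin (m+1) → ℝ, c * ∑ i, x i ^ 2 ≤ qf A x := by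
  set S : Set (Fin (m+1) → ℝ) := {x | ∑ i, x i ^ 2 = 1} with hS
  have hScompact : IsCompact S := by
    have hclosed : IsClosed S :=
      isClosed_eq (continuous_finset_sum _ fun i _ => (continuous_apply i).pow 2)
        continuous_const
    have hbounded : Bornology.IsBounded S := by
      apply Bornology.IsBounded.subset (Metric.isBounded_closedBall (x := 0) (r := 1))
      intro x hx
      simp only [Metric.mem_closedBall, dist_zero_right]
      rw [pi_norm_le_iff_of_nonneg zero_le_one]
      intro i
      rw [Real.norm_eq_abs, abs_le]
      have h1 : x i ^ 2 ≤ 1 := by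
        rw [← hx]
        exact Finset.single_le_sum (f := fun i => x i ^ 2) (fun j _ => sq_nonneg _)
          (Finset.mem_univ i)
      constructor <;> nlinarith
    exact Metric.isCompact_of_isClosed_isBounded hclosed hbounded
  have hSne : S.Nonempty := by
    refine ⟨Pi.single 0 1, ?_⟩
    simp only [hS, Set.mem_setOf_eq]
    rw [Finset.sum_eq_single 0]
    · simp
    · intro j _ hj; simp [Pi.single_apply, hj]
    · simp
  obtain ⟨x₀, hx₀S, hmin⟩ := hScompact.exists_isMinOn hSne ((continuous_qf A).continuousOn)
  have hx₀ne : x₀ ≠ 0 := by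
    intro h
    rw [h] at hx₀S
    simp [hS] at hx₀S
  refine ⟨qf A x₀, qf_pos hA hx₀ne, fun x => ?_⟩
  by_cases hx : x = 0
  · simp [hx, qf]
  · have hsum : 0 < ∑ i, x i ^ 2 := by
      rcases Function.ne_iff.1 hx with ⟨i, hi⟩
      have : 0 < x i ^ 2 := by
        have := sq_abs (x i)
        nlinarith [abs_pos.2 hi]
      exact lt_of_lt_of_le this
        (Finset.single_le_sum (f := fun i => x i ^ 2) (fun j _ => sq_nonneg _)
          (Finset.mem_univ i))
    set r : ℝ := Real.sqrt (∑ i, x i ^ 2) with hr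
    have hrpos : 0 < r := Real.sqrt_pos.2 hsum
    have hrsq : r ^ 2 = ∑ i, x i ^ 2 := Real.sq_sqrt hsum.le
    have hmem : r⁻¹ • x ∈ S := by
      simp only [hS, Set.mem_setOf_eq]
      have : ∀ i, (r⁻¹ • x) i ^ 2 = r⁻¹ ^ 2 * x i ^ 2 := by
        intro i; simp [smul_eq_mul]; ring
      rw [Finset.sum_congr rfl fun i _ => this i, ← Finset.mul_sum, ← hrsq]
      field_simp
    have h1 : qf A x₀ ≤ qf A (r⁻¹ • x) := hmin hmem
    have h2 : qf A (r⁻¹ • x) = r⁻¹ ^ 2 * qf A x := qf_smul A _ x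
    have h3 : qf A x = r ^ 2 * qf A (r⁻¹ • x) := by
      rw [h2]; field_simp
    calc qf A x₀ * ∑ i, x i ^ 2 = r ^ 2 * qf A x₀ := by rw [hrsq]; ring
    _ ≤ r ^ 2 * qf A (r⁻¹ • x) := by nlinarith
    _ = qf A x := h3.symm




variable {n : ℕ} {A : Matrix (Fin (n+1)) (Fin (n+1)) ℝ}

lemma continuous_snoc :
    Continuous (fun p : (Fin n → ℝ) × ℝ => (Fin.snoc p.1 p.2 : Fin (n+1) → ℝ)) := by
  refine continuous_pi fun i => ?_
  refine Fin.lastCases (motive := fun i => Continuous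
    (fun p : (Fin n → ℝ) × ℝ => (Fin.snoc p.1 p.2 : Fin (n+1) → ℝ) i)) ?_ ?_ i
  · show Continuous fun p : (Fin n → ℝ) × ℝ => (Fin.snoc p.1 p.2 : Fin (n+1) → ℝ) (Fin.last n)
    have : (fun p : (Fin n → ℝ) × ℝ => (Fin.snoc p.1 p.2 : Fin (n+1) → ℝ) (Fin.last n)) = fun p => p.2 := by
      funext p; simp
    rw [this]; exact continuous_snd
  · intro j
    show Continuous fun p : (Fin n → ℝ) × ℝ => (Fin.snoc p.1 p.2 : Fin (n+1) → ℝ) (Fin.castSucc j)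
    have : (fun p : (Fin n → ℝ) × ℝ => (Fin.snoc p.1 p.2 : Fin (n+1) → ℝ) (Fin.castSucc j))
        = fun p => p.1 j := by
      funext p; simp
    rw [this]; exact (continuous_apply j).comp continuous_fst

lemma continuous_dens (A : Matrix (Fin (n+1)) (Fin (n+1)) ℝ) :
    Continuous (fun p : (Fin n → ℝ) × ℝ => dens A p.1 p.2) := by
  unfold dens
  exact Real.continuous_exp.comp
    ((((continuous_qf A).comp continuous_snoc).neg).div_const 2)

lemma dens_pos (A : Matrix (Fin (n+1)) (Fin (n+1)) ℝ) (z : Fin n → ℝ) (y : ℝ) :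
    0 < dens A z y := Real.exp_pos _

lemma sum_sq_snoc (z : Fin n → ℝ) (y : ℝ) :
    ∑ i, (Fin.snoc z y : Fin (n+1) → ℝ) i ^ 2 = (∑ i, z i ^ 2) + y ^ 2 := by
  rw [Fin.sum_univ_castSucc]
  simp

lemma dens_le (hA : A.PosDef) {c : ℝ} (hc : 0 < c)
    (hcoer : ∀ x : Fin (n+1) → ℝ, c * ∑ i, x i ^ 2 ≤ qf A x) (z : Fin n → ℝ) (y : ℝ) :
    dens A z y ≤ Real.exp (-(c/2) * ∑ i, z i ^ 2) * Real.exp (-(c/2) * y ^ 2) := by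
  rw [dens, ← Real.exp_add]
  apply Real.exp_le_exp.2
  have := hcoer (Fin.snoc z y)
  rw [sum_sq_snoc] at this
  nlinarith

lemma integrable_exp_sum_sq {b : ℝ} (hb : 0 < b) :
    Integrable (fun z : Fin n → ℝ => Real.exp (-b * ∑ i, z i ^ 2)) := by
  have h := GaussianFourier.integrable_cexp_neg_mul_sum_add (ι := Fin n)
    (b := (b : ℂ)) (by simpa using hb) (fun _ => 0)
  have h2 := h.norm
  apply h2.congr
  apply Filter.Eventually.of_forall
  intro z
  have hval : (-(b:ℂ) * ∑ i, (z i:ℂ)^2 + ∑ _i : Fin n, (0:ℂ) * (z _i:ℂ))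
      = ((-b * ∑ i, z i ^ 2 : ℝ) : ℂ) := by push_cast; simp
  simp only
  rw [hval, Complex.norm_exp, Complex.ofReal_re]




variable {f : ℝ → ℝ}

/-- φ t = ∫_{Iio t} f -/
def phi (f : ℝ → ℝ) (t : ℝ) : ℝ := ∫ y in Set.Iio t, f y

lemma setInt_pos (hc : Continuous f) (hp : ∀ y, 0 < f y) (hi : Integrable f)
    {s : Set ℝ} (hs : MeasurableSet s) (hμ : 0 < volume s) :
    0 < ∫ y in s, f y := by
  rw [setIntegral_pos_iff_support_of_nonneg_ae
    (Filter.Eventually.of_forall fun y => (hp y).le) hi.integrableOn]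
  have : Function.support f = Set.univ := by
    ext y; simp [Function.support, (hp y).ne']
  rwa [this, Set.univ_inter]

lemma phi_pos (hc : Continuous f) (hp : ∀ y, 0 < f y) (hi : Integrable f) (t : ℝ) :
    0 < phi f t := by
  refine setInt_pos hc hp hi measurableSet_Iio ?_
  simp [Real.volume_Iio]

lemma phi_add (hi : Integrable f) {a b : ℝ} (hab : a ≤ b) :
    phi f b = phi f a + ∫ y in Set.Ico a b, f y := by
  have hd : Disjoint (Set.Iio a) (Set.Ico a b) :=
    Set.disjoint_left.2 fun x hx hx' => absurd hx'.1 (not_le.2 hx)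
  rw [phi, phi, ← Set.Iio_union_Ico_eq_Iio hab,
    setIntegral_union hd measurableSet_Ico hi.integrableOn hi.integrableOn]

lemma phi_strictMono (hc : Continuous f) (hp : ∀ y, 0 < f y) (hi : Integrable f) :
    StrictMono (phi f) := by
  intro a b hab
  rw [phi_add hi hab.le]
  have : 0 < ∫ y in Set.Ico a b, f y := by
    refine setInt_pos hc hp hi measurableSet_Ico ?_
    simp [Real.volume_Ico, hab]
  linarith

lemma phi_mono (hc : Continuous f) (hp : ∀ y, 0 < f y) (hi : Integrable f) :
    Monotone (phi f) := (phi_strictMono hc hp hi).monotone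

lemma phi_eq_primitive (hi : Integrable f) (t : ℝ) :
    phi f t = phi f 0 + ∫ y in (0:ℝ)..t, f y := by
  rcases le_total 0 t with h | h
  · rw [intervalIntegral.integral_of_le h, integral_Ioc_eq_integral_Ioo,
      ← integral_Ico_eq_integral_Ioo]
    exact phi_add hi h
  · rw [intervalIntegral.integral_of_ge h, integral_Ioc_eq_integral_Ioo,
      ← integral_Ico_eq_integral_Ioo]
    have := phi_add hi h
    rw [this]; ring

lemma phi_continuous (hi : Integrable f) : Continuous (phi f) := by
  have h := intervalIntegral.continuous_primitive
    (fun a b => hi.intervalIntegrable) (0:ℝ) (μ := volume)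
  have : phi f = fun t => phi f 0 + ∫ y in (0:ℝ)..t, f y := funext (phi_eq_primitive hi)
  rw [this]
  exact continuous_const.add h

lemma phi_le (hi : Integrable f) (hp : ∀ y, 0 < f y) (t : ℝ) :
    phi f t ≤ ∫ y, f y := by
  rw [← setIntegral_univ]
  exact setIntegral_mono_set hi.integrableOn
    (Filter.Eventually.of_forall fun y => (hp y).le)
    (HasSubset.Subset.eventuallyLE (Set.subset_univ _))

lemma iUnion_Iio_nat : ⋃ k : ℕ, Set.Iio ((k : ℝ)) = Set.univ := by
  ext x
  simp only [Set.mem_iUnion, Set.mem_Iio, Set.mem_univ, iff_true]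
  exact exists_nat_gt x

lemma iUnion_Ici_nat : ⋃ k : ℕ, Set.Ici (-(k : ℝ)) = Set.univ := by
  ext x
  simp only [Set.mem_iUnion, Set.mem_Ici, Set.mem_univ, iff_true]
  obtain ⟨k, hk⟩ := exists_nat_gt (-x)
  exact ⟨k, by linarith⟩

lemma tendsto_phi_atTop (hi : Integrable f) :
    Tendsto (fun k : ℕ => phi f k) atTop (𝓝 (∫ y, f y)) := by
  have h := tendsto_setIntegral_of_monotone (μ := volume) (f := f)
    (s := fun k : ℕ => Set.Iio ((k:ℝ))) (fun k => measurableSet_Iio)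
    (fun a b hab => Set.Iio_subset_Iio (by exact_mod_cast hab))
    (by rw [iUnion_Iio_nat]; exact hi.integrableOn)
  rwa [iUnion_Iio_nat, setIntegral_univ] at h

lemma phi_add_Ici (hi : Integrable f) (t : ℝ) :
    phi f t + ∫ y in Set.Ici t, f y = ∫ y, f y := by
  rw [phi, ← setIntegral_univ (μ := volume) (f := f), ← Set.Iio_union_Ici (a := t),
    setIntegral_union (Set.Iio_disjoint_Ici le_rfl) measurableSet_Ici
      hi.integrableOn hi.integrableOn]

lemma tendsto_phi_atBot (hi : Integrable f) :
    Tendsto (fun k : ℕ => phi f (-(k:ℝ))) atTop (𝓝 0) := by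
  have h := tendsto_setIntegral_of_monotone (μ := volume) (f := f)
    (s := fun k : ℕ => Set.Ici (-(k:ℝ))) (fun k => measurableSet_Ici)
    (fun a b hab => Set.Ici_subset_Ici.2 (by simp; exact_mod_cast hab))
    (by rw [iUnion_Ici_nat]; exact hi.integrableOn)
  rw [iUnion_Ici_nat, setIntegral_univ] at h
  have heq : (fun k : ℕ => phi f (-(k:ℝ)))
      = fun k : ℕ => (∫ y, f y) - ∫ y in Set.Ici (-(k:ℝ)), f y := by
    funext k
    have := phi_add_Ici hi (-(k:ℝ))
    linarith
  rw [heq]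
  have := (tendsto_const_nhds (x := ∫ y, f y) (f := atTop (α := ℕ))).sub h
  simpa using this




variable {f : ℝ → ℝ}

lemma sset_measurable (hc : Continuous f) (hp : ∀ y, 0 < f y) (hi : Integrable f) (v : ℝ) :
    MeasurableSet {t | phi f t < v} := by
  have : {t | phi f t < v} = phi f ⁻¹' (Set.Iio v) := rfl
  rw [this]
  exact (phi_mono hc hp hi).measurable measurableSet_Iio

/-- main 1D value lemma -/
lemma slice_eq (hc : Continuous f) (hp : ∀ y, 0 < f y) (hi : Integrable f)
    {s : Set ℝ} (hs : MeasurableSet s) :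
    ∫ y in {t | phi f t < ∫ u in s, f u}, f y = ∫ u in s, f u := by
  set v : ℝ := ∫ u in s, f u with hv
  have hv0 : 0 ≤ v := setIntegral_nonneg hs fun y _ => (hp y).le
  have hvT : v ≤ ∫ y, f y := by
    rw [← setIntegral_univ]
    exact setIntegral_mono_set hi.integrableOn
      (Filter.Eventually.of_forall fun y => (hp y).le)
      (HasSubset.Subset.eventuallyLE (Set.subset_univ _))
  rcases eq_or_lt_of_le hv0 with h0 | h0
  · -- v = 0 : the set is empty
    have : {t | phi f t < v} = (∅ : Set ℝ) := by
      ext t; simp only [Set.mem_setOf_eq, Set.mem_empty_iff_false, iff_false, not_lt, ← h0]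
      exact (phi_pos hc hp hi t).le
    rw [this]
    simp [← h0]
  · -- v > 0 : find t₀ with phi f t₀ < v
    have hbot := tendsto_phi_atBot (f := f) hi
    have hev : ∀ᶠ k : ℕ in atTop, phi f (-(k:ℝ)) < v :=
      hbot.eventually (Filter.Tendsto.eventually_lt_const h0 tendsto_id)
    obtain ⟨k₀, hk₀⟩ := hev.exists
    by_cases hub : ∃ t₁, v ≤ phi f t₁
    · obtain ⟨t₁, ht₁⟩ := hub
      have hle : -(k₀:ℝ) ≤ t₁ := by
        by_contra hcon
        push_neg at hcon
        exact absurd (phi_mono hc hp hi hcon.le) (by linarith)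
      have hIVT : v ∈ phi f '' Set.Icc (-(k₀:ℝ)) t₁ := by
        apply intermediate_value_Icc hle ((phi_continuous hi).continuousOn)
        exact ⟨hk₀.le, ht₁⟩
      obtain ⟨t', _, ht'⟩ := hIVT
      have : {t | phi f t < v} = Set.Iio t' := by
        ext t
        simp only [Set.mem_setOf_eq, Set.mem_Iio, ← ht']
        exact (phi_strictMono hc hp hi).lt_iff_lt
      rw [this]
      exact ht'
    · -- phi f t < v for all t, so set = univ and v = total mass
      push_neg at hub
      have hT : (∫ y, f y) ≤ v := by
        have := tendsto_phi_atTop (f := f) hi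
        exact le_of_tendsto this (Filter.Eventually.of_forall fun k => (hub _).le)
      have hset : {t | phi f t < v} = Set.univ := by
        ext t; simpa using hub t
      rw [hset, setIntegral_univ]
      linarith

/-- 1D contraction, asymmetric version -/
lemma slice_symmDiff_aux (hc : Continuous f) (hp : ∀ y, 0 < f y) (hi : Integrable f)
    {s₁ s₂ : Set ℝ} (hs₁ : MeasurableSet s₁) (hs₂ : MeasurableSet s₂)
    (hle : (∫ u in s₁, f u) ≤ ∫ u in s₂, f u) :
    ∫ y in ({t | phi f t < ∫ u in s₁, f u} ∆ {t | phi f t < ∫ u in s₂, f u}), f y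
      ≤ ∫ y in s₁ ∆ s₂, f y := by
  set v₁ : ℝ := ∫ u in s₁, f u
  set v₂ : ℝ := ∫ u in s₂, f u
  have hsub : {t | phi f t < v₁} ⊆ {t | phi f t < v₂} := fun t ht => lt_of_lt_of_le ht hle
  rw [Set.symmDiff_def, Set.diff_eq_empty.2 hsub, Set.empty_union]
  have hm₁ := sset_measurable hc hp hi v₁
  have hm₂ := sset_measurable hc hp hi v₂
  rw [integral_diff hm₁ hi.integrableOn hsub, slice_eq hc hp hi hs₁, slice_eq hc hp hi hs₂]
  -- now : v₂ - v₁ ≤ ∫ over s₁ ∆ s₂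
  have key : v₂ - v₁ ≤ ∫ y in s₂ \ s₁, f y := by
    have h1 : (∫ y in s₂ ∩ s₁, f y) + ∫ y in s₂ \ s₁, f y = v₂ :=
      integral_inter_add_diff hs₁ hi.integrableOn
    have h2 : (∫ y in s₂ ∩ s₁, f y) ≤ v₁ := by
      apply setIntegral_mono_set hi.integrableOn
        (Filter.Eventually.of_forall fun y => (hp y).le)
        (HasSubset.Subset.eventuallyLE Set.inter_subset_right)
    linarith
  refine key.trans ?_
  apply setIntegral_mono_set hi.integrableOn
    (Filter.Eventually.of_forall fun y => (hp y).le)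
    (HasSubset.Subset.eventuallyLE ?_)
  rw [Set.symmDiff_def]
  exact Set.subset_union_of_subset_right (le_refl _) _

lemma slice_symmDiff (hc : Continuous f) (hp : ∀ y, 0 < f y) (hi : Integrable f)
    {s₁ s₂ : Set ℝ} (hs₁ : MeasurableSet s₁) (hs₂ : MeasurableSet s₂) :
    ∫ y in ({t | phi f t < ∫ u in s₁, f u} ∆ {t | phi f t < ∫ u in s₂, f u}), f y
      ≤ ∫ y in s₁ ∆ s₂, f y := by
  rcases le_total (∫ u in s₁, f u) (∫ u in s₂, f u) with h | h
  · exact slice_symmDiff_aux hc hp hi hs₁ hs₂ h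
  · rw [symmDiff_comm, symmDiff_comm s₁ s₂]
    exact slice_symmDiff_aux hc hp hi hs₂ hs₁ h



variable {n : ℕ} {A : Matrix (Fin (n+1)) (Fin (n+1)) ℝ}

lemma integrable_dens (hA : A.PosDef) :
    Integrable (fun p : (Fin n → ℝ) × ℝ => dens A p.1 p.2) := by
  obtain ⟨c, hc, hcoer⟩ := qf_coercive hA
  have hb : Integrable (fun p : (Fin n → ℝ) × ℝ =>
      Real.exp (-(c/2) * ∑ i, p.1 i ^ 2) * Real.exp (-(c/2) * p.2 ^ 2)) := by
    rw [MeasureTheory.Measure.volume_eq_prod]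
    exact (integrable_exp_sum_sq (half_pos hc)).mul_prod
      (integrable_exp_neg_mul_sq (half_pos hc))
  refine hb.mono' ((continuous_dens A).aestronglyMeasurable) ?_
  refine Filter.Eventually.of_forall fun p => ?_
  rw [Real.norm_eq_abs, abs_of_pos (dens_pos A p.1 p.2)]
  exact dens_le hA hc hcoer p.1 p.2

lemma integrable_dens_slice (hA : A.PosDef) (z : Fin n → ℝ) :
    Integrable (fun y => dens A z y) := by
  obtain ⟨c, hc, hcoer⟩ := qf_coercive hA
  have hb : Integrable (fun y : ℝ =>
      Real.exp (-(c/2) * ∑ i, z i ^ 2) * Real.exp (-(c/2) * y ^ 2)) :=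
    (integrable_exp_neg_mul_sq (half_pos hc)).const_mul _
  refine hb.mono' ?_ ?_
  · exact ((continuous_dens A).comp (Continuous.prodMk_right z)).aestronglyMeasurable
  · refine Filter.Eventually.of_forall fun y => ?_
    rw [Real.norm_eq_abs, abs_of_pos (dens_pos A z y)]
    exact dens_le hA hc hcoer z y

lemma continuous_dens_slice (A : Matrix (Fin (n+1)) (Fin (n+1)) ℝ) (z : Fin n → ℝ) :
    Continuous (fun y => dens A z y) := by
  have h := (continuous_dens A).comp (Continuous.prodMk_right z)
  exact h

lemma sect_ehrhardSymm (E : Set ((Fin n → ℝ) × ℝ)) (z : Fin n → ℝ) :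
    sect (ehrhardSymm A E) z
      = {t | phi (fun y => dens A z y) t < ∫ u in sect E z, dens A z u} := by
  ext y
  simp only [sect, ehrhardSymm, phi, Set.mem_setOf_eq]

lemma sect_symmDiff (F₁ F₂ : Set ((Fin n → ℝ) × ℝ)) (z : Fin n → ℝ) :
    sect (F₁ ∆ F₂) z = sect F₁ z ∆ sect F₂ z := by
  ext y
  simp [sect, Set.mem_symmDiff]

lemma measurableSet_symmDiff' {α : Type*} [MeasurableSpace α] {s t : Set α}
    (hs : MeasurableSet s) (ht : MeasurableSet t) : MeasurableSet (s ∆ t) := by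
  rw [Set.symmDiff_def]
  exact (hs.diff ht).union (ht.diff hs)



variable {n : ℕ} {A : Matrix (Fin (n+1)) (Fin (n+1)) ℝ}

lemma measurable_sect {F : Set ((Fin n → ℝ) × ℝ)} (hF : MeasurableSet F) (z : Fin n → ℝ) :
    MeasurableSet (sect F z) := hF.preimage measurable_prodMk_left

lemma indicator_sect (F : Set ((Fin n → ℝ) × ℝ)) (z : Fin n → ℝ) (y : ℝ) :
    F.indicator (fun p => dens A p.1 p.2) (z, y)
      = (sect F z).indicator (fun y => dens A z y) y := by
  by_cases h : (z, y) ∈ F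
  · rw [Set.indicator_of_mem h, Set.indicator_of_mem (show y ∈ sect F z from h)]
  · rw [Set.indicator_of_notMem h, Set.indicator_of_notMem (show y ∉ sect F z from h)]

lemma iterated (hA : A.PosDef) {F : Set ((Fin n → ℝ) × ℝ)} (hF : MeasurableSet F) :
    ∫ p in F, dens A p.1 p.2 = ∫ z, ∫ y in sect F z, dens A z y := by
  have hint : Integrable (F.indicator fun p : (Fin n → ℝ) × ℝ => dens A p.1 p.2) :=
    (integrable_dens hA).indicator hF
  rw [← integral_indicator hF]
  rw [MeasureTheory.Measure.volume_eq_prod] at hint ⊢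
  rw [MeasureTheory.integral_prod _ hint]
  refine integral_congr_ae (Filter.Eventually.of_forall fun z => ?_)
  show (∫ y, F.indicator (fun p : (Fin n → ℝ) × ℝ => dens A p.1 p.2) (z, y))
      = ∫ y in sect F z, dens A z y
  rw [← integral_indicator (measurable_sect hF z)]
  refine integral_congr_ae (Filter.Eventually.of_forall fun y => ?_)
  exact indicator_sect F z y

lemma marg_integrable (hA : A.PosDef) {F : Set ((Fin n → ℝ) × ℝ)} (hF : MeasurableSet F) :
    Integrable (fun z => ∫ y in sect F z, dens A z y) := by
  have hint : Integrable (F.indicator fun p : (Fin n → ℝ) × ℝ => dens A p.1 p.2) :=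
    (integrable_dens hA).indicator hF
  rw [MeasureTheory.Measure.volume_eq_prod] at hint
  have h := hint.integral_prod_left
  refine h.congr (Filter.Eventually.of_forall fun z => ?_)
  show (∫ y, F.indicator (fun p : (Fin n → ℝ) × ℝ => dens A p.1 p.2) (z, y))
      = ∫ y in sect F z, dens A z y
  rw [← integral_indicator (measurable_sect hF z)]
  refine integral_congr_ae (Filter.Eventually.of_forall fun y => ?_)
  exact indicator_sect F z y

lemma marg_stronglyMeasurable {F : Set ((Fin n → ℝ) × ℝ)} (hF : MeasurableSet F) :
    StronglyMeasurable (fun z => ∫ y in sect F z, dens A z y) := by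
  have h : StronglyMeasurable (F.indicator fun p : (Fin n → ℝ) × ℝ => dens A p.1 p.2) :=
    (continuous_dens A).stronglyMeasurable.indicator hF
  have h2 := StronglyMeasurable.integral_prod_right' (ν := volume) h
  have heq : (fun x : Fin n → ℝ => ∫ y, F.indicator
        (fun p : (Fin n → ℝ) × ℝ => dens A p.1 p.2) (x, y))
      = fun z => ∫ y in sect F z, dens A z y := by
    funext z
    rw [← integral_indicator (measurable_sect hF z)]
    refine integral_congr_ae (Filter.Eventually.of_forall fun y => ?_)
    exact indicator_sect F z y
  rw [← heq]
  exact h2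

lemma phi_stronglyMeasurable :
    StronglyMeasurable (fun p : (Fin n → ℝ) × ℝ => ∫ y in Set.Iio p.2, dens A p.1 y) := by
  set g : ((Fin n → ℝ) × ℝ) × ℝ → ℝ :=
    fun q => ({q : ((Fin n → ℝ) × ℝ) × ℝ | q.2 < q.1.2}).indicator
      (fun q => dens A q.1.1 q.2) q with hg
  have hmeas : MeasurableSet {q : ((Fin n → ℝ) × ℝ) × ℝ | q.2 < q.1.2} :=
    measurableSet_lt measurable_snd (measurable_snd.comp measurable_fst)
  have hgs : StronglyMeasurable g :=
    ((continuous_dens A).comp ((continuous_fst.comp continuous_fst).prodMk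
      continuous_snd)).stronglyMeasurable.indicator hmeas
  have h2 := StronglyMeasurable.integral_prod_right' (ν := volume) hgs
  have heq : (fun p : (Fin n → ℝ) × ℝ => ∫ y, g (p, y))
      = fun p : (Fin n → ℝ) × ℝ => ∫ y in Set.Iio p.2, dens A p.1 y := by
    funext p
    rw [← integral_indicator measurableSet_Iio]
    refine integral_congr_ae (Filter.Eventually.of_forall fun y => ?_)
    show g (p, y) = (Set.Iio p.2).indicator (fun y => dens A p.1 y) y
    simp only [hg, Set.indicator_apply, Set.mem_setOf_eq, Set.mem_Iio]
  rw [← heq]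
  exact h2

lemma measurableSet_ehrhardSymm {E : Set ((Fin n → ℝ) × ℝ)} (hE : MeasurableSet E) :
    MeasurableSet (ehrhardSymm A E) := by
  have h1 := (phi_stronglyMeasurable (A := A)).measurable
  have h2 := (marg_stronglyMeasurable (A := A) hE).measurable
  exact measurableSet_lt h1 (h2.comp measurable_fst)



end EhrAux

open EhrAux in
/-- Mass preservation and L¹-contraction of Ehrhard symmetrization:
for sets `E, E₁, E₂` of finite anisotropic Gaussian perimeter,
`γ_A(E) = γ_A(E^s)` and `γ_A(E₁ Δ E₂) ≥ γ_A(E₁^s Δ E₂^s)`. -/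
theorem ehrhardSymm_mass_and_contraction {n : ℕ}
    (A : Matrix (Fin (n + 1)) (Fin (n + 1)) ℝ) (hA : A.PosDef)
    (E E₁ E₂ : Set ((Fin n → ℝ) × ℝ))
    (hE : MeasurableSet E) (hE₁ : MeasurableSet E₁) (hE₂ : MeasurableSet E₂)
    (hEp : finGaussPerim A E) (hE₁p : finGaussPerim A E₁) (hE₂p : finGaussPerim A E₂) :
    gMass A (ehrhardSymm A E) = gMass A E ∧
      gMass A (ehrhardSymm A E₁ ∆ ehrhardSymm A E₂) ≤ gMass A (E₁ ∆ E₂) := by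
  constructor
  · unfold gMass
    congr 1
    rw [iterated hA (measurableSet_ehrhardSymm hE), iterated hA hE]
    refine integral_congr_ae (Filter.Eventually.of_forall fun z => ?_)
    show (∫ y in sect (ehrhardSymm A E) z, dens A z y) = ∫ y in sect E z, dens A z y
    have h := slice_eq (f := fun y => dens A z y) (continuous_dens_slice A z)
      (dens_pos A z) (integrable_dens_slice hA z) (measurable_sect hE z)
    rw [sect_ehrhardSymm E z]
    exact h
  · unfold gMass
    have hC : 0 ≤ Real.sqrt A.det / (2 * Real.pi) ^ (((n : ℝ) + 1) / 2) := by
      apply div_nonneg (Real.sqrt_nonneg _)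
      positivity
    apply mul_le_mul_of_nonneg_left _ hC
    have hS₁ := measurableSet_ehrhardSymm (A := A) hE₁
    have hS₂ := measurableSet_ehrhardSymm (A := A) hE₂
    rw [iterated hA (measurableSet_symmDiff' hS₁ hS₂),
      iterated hA (measurableSet_symmDiff' hE₁ hE₂)]
    refine integral_mono (marg_integrable hA (measurableSet_symmDiff' hS₁ hS₂))
      (marg_integrable hA (measurableSet_symmDiff' hE₁ hE₂)) fun z => ?_
    show (∫ y in sect (ehrhardSymm A E₁ ∆ ehrhardSymm A E₂) z, dens A z y)
      ≤ ∫ y in sect (E₁ ∆ E₂) z, dens A z y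
    rw [sect_symmDiff, sect_symmDiff, sect_ehrhardSymm E₁ z, sect_ehrhardSymm E₂ z]
    exact slice_symmDiff (continuous_dens_slice A z) (dens_pos A z)
      (integrable_dens_slice hA z) (measurable_sect hE₁ z) (measurable_sect hE₂ z)
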